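/- Let k be a field, let R = k[X, Y, Z]/(XZ), and denote by x, y, z the images of X, Y, Z in R. For n ≥ 1 let I_n be the ideal of R generated by xⁿ, yⁿ and x^{n−1}y + zⁿ, and let J be the ideal of R generated by z. Then the element z^{n²} does NOT belong to the ideal I_n·(I_n^{n−1} ∩ J). -/
import Mathlib


set_option synthInstance.maxHeartbeats 1000000
set_option maxHeartbeats 1000000

open MvPolynomial Finsupp Finset Pointwise

namespace Stmt15Aux

variable {k : Type*} [Field k]

/-- The third generator `X^(n-1) Y + Z^n`. -/
noncomputable def Gp (k : Type*) [Field k] (n : ℕ) : MvPolynomial (Fin 3) k :=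
  X 0 ^ (n-1) * X 1 + X 2 ^ n

/-- Exponent of the `i`-th term in the binomial expansion of
`X^(na) Y^(nb) (X^(n-1)Y + Z^n)^c`. -/
noncomputable def Ei (n a b c i : ℕ) : Fin 3 →₀ ℕ :=
  single 0 (n*a + (n-1)*i) + single 1 (n*b + i) + single 2 (n*(c-i))

lemma trip_le_single2 (α β γ M : ℕ) :
    (single (0:Fin 3) α + single 1 β + single 2 γ ≤ single 2 M) ↔ (α = 0 ∧ β = 0 ∧ γ ≤ M) := by
  rw [Finsupp.le_def]
  constructor
  · intro h
    refine ⟨by simpa using h 0, by simpa using h 1, by simpa using h 2⟩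
  · rintro ⟨rfl, rfl, h⟩ j
    fin_cases j <;> simp [h]

lemma trip_le_pair (α β γ U V : ℕ) :
    (single (0:Fin 3) α + single 1 β + single 2 γ ≤ single 0 U + single 1 V) ↔
      (α ≤ U ∧ β ≤ V ∧ γ = 0) := by
  rw [Finsupp.le_def]
  constructor
  · intro h
    refine ⟨by simpa using h 0, by simpa using h 1, by simpa using h 2⟩
  · rintro ⟨h1, h2, rfl⟩ j
    fin_cases j <;> simp [h1, h2]

lemma mono_eq (α β γ : ℕ) :
    (X 0 : MvPolynomial (Fin 3) k)^α * X 1^β * X 2^γ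
      = monomial (single 0 α + single 1 β + single 2 γ) (1:k) := by
  rw [X_pow_eq_monomial, X_pow_eq_monomial, X_pow_eq_monomial, monomial_mul, monomial_mul]
  simp

lemma expand (n a b c : ℕ) (r : MvPolynomial (Fin 3) k) :
    r * ((X 0)^(n*a) * (X 1)^(n*b) * (Gp k n)^c) =
      ∑ i ∈ range (c+1), (c.choose i) • (r * monomial (Ei n a b c i) (1:k)) := by
  rw [Gp, add_pow, Finset.mul_sum, Finset.mul_sum]
  refine Finset.sum_congr rfl fun i hi => ?_
  rw [nsmul_eq_mul, Ei, ← mono_eq]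
  ring

lemma coeff_term (t e : Fin 3 →₀ ℕ) (r : MvPolynomial (Fin 3) k) :
    coeff t (r * monomial e (1:k)) = if e ≤ t then coeff (t - e) r else 0 := by
  rw [coeff_mul_monomial']; split_ifs <;> simp

lemma coeff_prod (n a b c : ℕ) (t : Fin 3 →₀ ℕ) (r : MvPolynomial (Fin 3) k) :
    coeff t (r * ((X 0)^(n*a) * (X 1)^(n*b) * (Gp k n)^c)) =
      ∑ i ∈ range (c+1),
        (c.choose i) • (if Ei n a b c i ≤ t then coeff (t - Ei n a b c i) r else 0) := by
  rw [expand, coeff_sum]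
  exact Finset.sum_congr rfl fun i _ => by rw [coeff_smul, coeff_term]

lemma coeffZ (n a b c : ℕ) (hn : 2 ≤ n) (habc : a + b + c = n - 1)
    (r : MvPolynomial (Fin 3) k) :
    coeff (single 2 (n*(n-1))) (r * ((X 0)^(n*a) * (X 1)^(n*b) * (Gp k n)^c)) =
      if a = 0 ∧ b = 0 then coeff 0 r else 0 := by
  rw [coeff_prod]
  by_cases hab : a = 0 ∧ b = 0
  · obtain ⟨rfl, rfl⟩ := hab
    have hc : c = n - 1 := by omega
    subst hc
    rw [if_pos ⟨rfl, rfl⟩]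
    rw [Finset.sum_eq_single_of_mem 0 (Finset.mem_range.mpr (by omega))]
    · have he : Ei n 0 0 (n-1) 0 = single 2 (n*(n-1)) := by simp [Ei]
      rw [he, if_pos le_rfl, tsub_self, Nat.choose_zero_right, one_smul]
    · intro i _ hi
      rw [Ei, if_neg, smul_zero]
      rw [trip_le_single2]
      rintro ⟨-, h2, -⟩
      omega
  · rw [if_neg hab]
    apply Finset.sum_eq_zero
    intro i _
    rw [Ei, if_neg, smul_zero]
    rw [trip_le_single2]
    rintro ⟨h1, h2, -⟩
    have ha0 : a = 0 := by
      rcases Nat.eq_zero_of_add_eq_zero_right h1 |> Nat.mul_eq_zero.mp with h | h <;> omega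
    have hb0 : b = 0 := by
      have := Nat.eq_zero_of_add_eq_zero_right h2
      rcases Nat.mul_eq_zero.mp this with h | h <;> omega
    exact hab ⟨ha0, hb0⟩

lemma coeffXY (n a b c : ℕ) (hn : 2 ≤ n) (habc : a + b + c = n - 1)
    (r : MvPolynomial (Fin 3) k) :
    coeff (single 0 ((n-1)*(n-1)) + single 1 (n-1))
        (r * ((X 0)^(n*a) * (X 1)^(n*b) * (Gp k n)^c)) =
      if a = 0 ∧ b = 0 then coeff 0 r else 0 := by
  rw [coeff_prod]
  by_cases hab : a = 0 ∧ b = 0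
  · obtain ⟨rfl, rfl⟩ := hab
    have hc : c = n - 1 := by omega
    subst hc
    rw [if_pos ⟨rfl, rfl⟩]
    rw [Finset.sum_eq_single_of_mem (n-1) (Finset.mem_range.mpr (by omega))]
    · have he : Ei n 0 0 (n-1) (n-1) = single 0 ((n-1)*(n-1)) + single 1 (n-1) := by
        simp [Ei]
      rw [he, if_pos le_rfl, tsub_self, Nat.choose_self, one_smul]
    · intro i hi hine
      rw [Ei, if_neg, smul_zero]
      rw [trip_le_pair]
      rintro ⟨-, -, h3⟩
      have := Finset.mem_range.mp hi
      rcases Nat.mul_eq_zero.mp h3 with h | h <;> omega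
  · rw [if_neg hab]
    apply Finset.sum_eq_zero
    intro i hi
    rw [Ei, if_neg, smul_zero]
    rw [trip_le_pair]
    rintro ⟨h1, h2, h3⟩
    have hb0 : b = 0 := by
      by_contra hb
      have : n ≤ n*b := Nat.le_mul_of_pos_right n (by omega)
      omega
    have hci : c ≤ i := by
      rcases Nat.mul_eq_zero.mp h3 with h | h <;> omega
    have hca : a + c = n - 1 := by omega
    have hnm : n = (n-1) + 1 := by omega
    have h4 : n*a + (n-1)*c ≤ (n-1)*(n-1) :=
      le_trans (Nat.add_le_add_left (Nat.mul_le_mul_left _ hci) _) h1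
    set m := n - 1 with hmdef
    have h5 : m*a + a + m*c ≤ m*a + m*c := by
      calc m*a + a + m*c = (m+1)*a + m*c := by ring
        _ = n*a + m*c := by rw [← hnm]
        _ ≤ m*m := h4
        _ = m*(a+c) := by rw [hca]
        _ = m*a + m*c := Nat.mul_add m a c
    have h6 : (m*a + m*c) + a ≤ (m*a + m*c) + 0 := by
      calc (m*a + m*c) + a = m*a + a + m*c := by ring
        _ ≤ m*a + m*c := h5
        _ = (m*a + m*c) + 0 := by ring
    have ha0 : a = 0 := by
      have := Nat.le_of_add_le_add_left h6
      omega
    exact hab ⟨ha0, hb0⟩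

/-- The set of products of `m` generators. -/
def Sset (n m : ℕ) : Set (MvPolynomial (Fin 3) k) :=
  {f | ∃ a b c : ℕ, a + b + c = m ∧ f = (X 0)^(n*a) * (X 1)^(n*b) * (Gp k n)^c}

lemma pow_le (n m : ℕ) :
    (Ideal.span {(X 0)^n, (X 1)^n, (Gp k n)})^m ≤ Ideal.span (Sset n m) := by
  induction m with
  | zero =>
    have h1 : (1 : MvPolynomial (Fin 3) k) ∈ Sset n 0 := ⟨0, 0, 0, rfl, by simp⟩
    rw [pow_zero, Ideal.one_eq_top, (Ideal.eq_top_iff_one _).mpr (Ideal.subset_span h1)]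
  | succ m ih =>
    rw [pow_succ]
    calc _ ≤ Ideal.span (Sset n m (k := k)) * Ideal.span {(X 0)^n, (X 1)^n, Gp k n} :=
          Ideal.mul_mono ih le_rfl
      _ = Ideal.span (Sset n m * {(X 0)^n, (X 1)^n, Gp k n}) := Ideal.span_mul_span' _ _
      _ ≤ Ideal.span (Sset n (m+1)) := ?_
    rw [Ideal.span_le]
    rintro f hf
    rw [Set.mem_mul] at hf
    obtain ⟨p, hp, q, hq, rfl⟩ := hf
    obtain ⟨a, b, c, habc, rfl⟩ := hp
    apply Ideal.subset_span
    simp only [Set.mem_insert_iff, Set.mem_singleton_iff] at hq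
    rcases hq with rfl | rfl | rfl
    · exact ⟨a+1, b, c, by omega, by ring⟩
    · exact ⟨a, b+1, c, by omega, by ring⟩
    · exact ⟨a, b, c+1, by omega, by ring⟩

lemma key (n : ℕ) (hn : 1 ≤ n) (K : MvPolynomial (Fin 3) k)
    (hK : K ∈ Ideal.span (Sset n (n-1))) (r : MvPolynomial (Fin 3) k) :
    coeff (single 2 (n*(n-1))) (r*K) =
      coeff (single 0 ((n-1)*(n-1)) + single 1 (n-1)) (r*K) := by
  induction hK using Submodule.span_induction generalizing r with
  | mem f hf =>
    obtain ⟨a, b, c, habc, rfl⟩ := hf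
    by_cases h1 : n = 1
    · subst h1
      norm_num
    · rw [coeffZ n a b c (by omega) habc r, coeffXY n a b c (by omega) habc r]
  | zero => simp
  | add f g _ _ hf hg => rw [mul_add, coeff_add, coeff_add, hf, hg]
  | smul s f _ hf =>
    rw [smul_eq_mul, ← mul_assoc]
    exact hf (r*s)

lemma crux (n : ℕ) (hn : 1 ≤ n) (K : MvPolynomial (Fin 3) k)
    (hK1 : K ∈ (Ideal.span {(X 0)^n, (X 1)^n, Gp k n})^(n-1))
    (hK2 : K ∈ Ideal.span {(X 2 : MvPolynomial (Fin 3) k)}) :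
    coeff (single 2 (n*(n-1))) K = 0 := by
  have h := key n hn K (pow_le n (n-1) hK1) 1
  rw [one_mul] at h
  rw [h]
  obtain ⟨g, rfl⟩ := Ideal.mem_span_singleton.mp hK2
  rw [← pow_one (X 2 : MvPolynomial (Fin 3) k), X_pow_eq_monomial,
    coeff_monomial_mul', if_neg]
  rw [Finsupp.single_le_iff]
  simp

lemma mem_triple_mul {R : Type*} [CommRing R] {g1 g2 g3 v : R} {K : Ideal R}
    (h : v ∈ Ideal.span {g1, g2, g3} * K) :
    ∃ k1 ∈ K, ∃ k2 ∈ K, ∃ k3 ∈ K, v = g1*k1 + g2*k2 + g3*k3 := by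
  rw [Ideal.span_insert, Ideal.span_insert, Ideal.sup_mul, Ideal.sup_mul] at h
  obtain ⟨t1, ht1, t, ht, rfl⟩ := Submodule.mem_sup.mp h
  obtain ⟨t2, ht2, t3, ht3, rfl⟩ := Submodule.mem_sup.mp ht
  obtain ⟨k1, hk1, hq1⟩ := Ideal.mem_span_singleton_mul.mp ht1
  obtain ⟨k2, hk2, hq2⟩ := Ideal.mem_span_singleton_mul.mp ht2
  obtain ⟨k3, hk3, hq3⟩ := Ideal.mem_span_singleton_mul.mp ht3
  exact ⟨k1, hk1, k2, hk2, k3, hk3, by rw [← hq1, ← hq2, ← hq3, add_assoc]⟩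

end Stmt15Aux

open Stmt15Aux
theorem stmt15 (k : Type*) [Field k]
    (x y z : MvPolynomial (Fin 3) k ⧸
      Ideal.span {(MvPolynomial.X 0 : MvPolynomial (Fin 3) k) * MvPolynomial.X 2})
    (hx : x = Ideal.Quotient.mk _ (MvPolynomial.X 0))
    (hy : y = Ideal.Quotient.mk _ (MvPolynomial.X 1))
    (hz : z = Ideal.Quotient.mk _ (MvPolynomial.X 2))
    (n : ℕ) (hn : 1 ≤ n) :
    z ^ (n ^ 2) ∉
      Ideal.span {x ^ n, y ^ n, x ^ (n - 1) * y + z ^ n} *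
        (Ideal.span {x ^ n, y ^ n, x ^ (n - 1) * y + z ^ n} ^ (n - 1) ⊓ Ideal.span {z}) := by
  subst hx hy hz
  set π := Ideal.Quotient.mk
    (Ideal.span {(MvPolynomial.X 0 : MvPolynomial (Fin 3) k) * MvPolynomial.X 2}) with hπ
  intro hmem
  have hI : Ideal.span {π (X 0) ^ n, π (X 1) ^ n, π (X 0) ^ (n - 1) * π (X 1) + π (X 2) ^ n}
      = Ideal.map π (Ideal.span {(X 0 : MvPolynomial (Fin 3) k)^n, (X 1)^n, Gp k n}) := by
    rw [Ideal.map_span, Set.image_insert_eq, Set.image_insert_eq, Set.image_singleton]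
    simp [Gp]
  have hJ : Ideal.span {π (X 2)} = Ideal.map π (Ideal.span {(X 2 : MvPolynomial (Fin 3) k)}) := by
    rw [Ideal.map_span, Set.image_singleton]
  obtain ⟨k1, hk1, k2, hk2, k3, hk3, heq⟩ := mem_triple_mul hmem
  have h31 := hk3.1
  have h32 := hk3.2
  rw [hI, ← Ideal.map_pow] at h31
  rw [hJ] at h32
  obtain ⟨K3, hK3mem, hK3⟩ :=
    (Ideal.mem_map_iff_of_surjective π Ideal.Quotient.mk_surjective).mp h31
  obtain ⟨L3, hL3mem, hL3⟩ :=
    (Ideal.mem_map_iff_of_surjective π Ideal.Quotient.mk_surjective).mp h32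
  have hdiff : K3 - L3 ∈ Ideal.span {(MvPolynomial.X 0 : MvPolynomial (Fin 3) k) * MvPolynomial.X 2} :=
    Ideal.Quotient.eq.mp (hK3.trans hL3.symm)
  have hK3Z : K3 ∈ Ideal.span {(X 2 : MvPolynomial (Fin 3) k)} := by
    have hle : Ideal.span {(MvPolynomial.X 0 : MvPolynomial (Fin 3) k) * MvPolynomial.X 2}
        ≤ Ideal.span {(X 2 : MvPolynomial (Fin 3) k)} := by
      rw [Ideal.span_le, Set.singleton_subset_iff]
      exact Ideal.mem_span_singleton.mpr ⟨X 0, mul_comm _ _⟩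
    have h1 : K3 - L3 ∈ Ideal.span {(X 2 : MvPolynomial (Fin 3) k)} := hle hdiff
    have h2 : K3 = (K3 - L3) + L3 := by ring
    rw [h2]
    exact Ideal.add_mem _ h1 hL3mem
  obtain ⟨K1, hK1⟩ := Ideal.Quotient.mk_surjective k1
  obtain ⟨K2, hK2⟩ := Ideal.Quotient.mk_surjective k2
  have hquot : π ((X 2 : MvPolynomial (Fin 3) k)^(n^2))
      = π ((X 0)^n * K1 + (X 1)^n * K2 + Gp k n * K3) := by
    rw [map_add, map_add, map_mul, map_mul, map_mul, map_pow, map_pow, map_pow]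
    rw [hK1, hK2, hK3]
    rw [heq]
    simp [Gp]
  have hsub := Ideal.Quotient.eq.mp hquot
  obtain ⟨q, hq⟩ := Ideal.mem_span_singleton.mp hsub
  have hmain : (X 2 : MvPolynomial (Fin 3) k)^(n^2)
      = (X 0)^n * K1 + (X 1)^n * K2 + Gp k n * K3 + (MvPolynomial.X 0 * MvPolynomial.X 2) * q := by
    rw [← hq]; ring
  have hco := congrArg (coeff (single 2 (n^2))) hmain
  rw [X_pow_eq_monomial, coeff_monomial, if_pos rfl] at hco
  rw [coeff_add, coeff_add, coeff_add] at hco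
  have c1 : coeff (single 2 (n^2)) ((X 0 : MvPolynomial (Fin 3) k)^n * K1) = 0 := by
    rw [X_pow_eq_monomial, coeff_monomial_mul', if_neg]
    rw [Finsupp.single_le_iff]
    simp
    omega
  have c2 : coeff (single 2 (n^2)) ((X 1 : MvPolynomial (Fin 3) k)^n * K2) = 0 := by
    rw [X_pow_eq_monomial, coeff_monomial_mul', if_neg]
    rw [Finsupp.single_le_iff]
    simp
    omega
  have c4 : coeff (single 2 (n^2)) ((MvPolynomial.X 0 * MvPolynomial.X 2 : MvPolynomial (Fin 3) k) * q) = 0 := by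
    rw [mul_assoc, coeff_X_mul', if_neg]
    simp
  have c3 : coeff (single 2 (n^2)) (Gp k n * K3) = 0 := by
    rw [Gp, add_mul, coeff_add]
    have c3a : coeff (single 2 (n^2))
        ((X 0 : MvPolynomial (Fin 3) k)^(n-1) * X 1 * K3) = 0 := by
      rw [show (X 0 : MvPolynomial (Fin 3) k)^(n-1) * X 1 * K3
          = X 1 * ((X 0)^(n-1) * K3) by ring]
      rw [coeff_X_mul', if_neg]
      simp
    have c3b : coeff (single 2 (n^2)) ((X 2 : MvPolynomial (Fin 3) k)^n * K3) = 0 := by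
      rw [X_pow_eq_monomial, coeff_monomial_mul', if_pos, one_mul]
      · have hsingle : (single (2:Fin 3) (n^2)) - single 2 n = single 2 (n*(n-1)) := by
          rw [← Finsupp.single_tsub]
          congr 1
          rw [Nat.mul_sub, pow_two, mul_one]
        rw [hsingle]
        exact crux n hn K3 hK3mem hK3Z
      · rw [Finsupp.single_le_iff, Finsupp.single_eq_same]
        exact Nat.le_self_pow (by omega) n
    rw [c3a, c3b, add_zero]
  rw [c1, c2, c3, c4] at hco
  simp at hco
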